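/- arXiv:1405.5506 — 2 statements merged into one kernel-verified Lean document; each statement's English description precedes it below -/
import Mathlib

section
/- With notation as above, δ(k) ⊆ g⊗k + k⊗g if and only if C_σ(r) = (σ⊗σ)(r) + r − (σ⊗1)(r) − (1⊗σ)(r) is invariant under the adjoint action of k on g⊗g (i.e., (ad_x⊗1 + 1⊗ad_x)(C_σ(r)) = 0 for all x ∈ k). -/
open TensorProduct

private theorem ker_map_eq (K : Type*) [Field K] (g : Type*) [AddCommGroup g] [Module K g]
    (τ : g →ₗ[K] g) :
    LinearMap.ker (TensorProduct.map τ τ) =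
      LinearMap.range (TensorProduct.map (LinearMap.id : g →ₗ[K] g) (LinearMap.ker τ).subtype) ⊔
      LinearMap.range (TensorProduct.map (LinearMap.ker τ).subtype (LinearMap.id : g →ₗ[K] g)) := by
  set k := LinearMap.ker τ
  set q := k.mkQ
  have hτ : τ = (k.liftQ τ le_rfl).comp q := by ext x; simp [q]
  have hinj : Function.Injective (k.liftQ τ le_rfl) := by
    rw [← LinearMap.ker_eq_bot]
    exact Submodule.ker_liftQ_eq_bot _ _ _ le_rfl
  have h1 : TensorProduct.map τ τ =
      (TensorProduct.map (k.liftQ τ le_rfl) (k.liftQ τ le_rfl)).comp (TensorProduct.map q q) := by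
    rw [← TensorProduct.map_comp, ← hτ]
  have h2 : Function.Injective (TensorProduct.map (k.liftQ τ le_rfl) (k.liftQ τ le_rfl)) := by
    rw [← LinearMap.lTensor_comp_rTensor]
    exact (Module.Flat.lTensor_preserves_injective_linearMap _ hinj).comp
      (Module.Flat.rTensor_preserves_injective_linearMap _ hinj)
  rw [h1, LinearMap.ker_comp, LinearMap.ker_eq_bot.mpr h2, Submodule.comap_bot]
  exact TensorProduct.map_ker (LinearMap.exact_subtype_mkQ k) (Submodule.mkQ_surjective k)
    (LinearMap.exact_subtype_mkQ k) (Submodule.mkQ_surjective k)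

/-- `δ(k) ⊆ g ⊗ k + k ⊗ g` if and only if
`C_σ(r) = (σ⊗σ)(r) + r - (σ⊗1)(r) - (1⊗σ)(r)` is invariant under the adjoint action of the
fixed-point subalgebra `k = g^σ` on `g ⊗ g`. -/
theorem stmt2 (K : Type*) [Field K] (g : Type*) [LieRing g] [LieAlgebra K g]
    [FiniteDimensional K g]
    (σ : g →ₗ[K] g) (hσbij : Function.Bijective σ)
    (hσlie : ∀ x y : g, σ ⁅x, y⁆ = ⁅σ x, σ y⁆)
    (k : Submodule K g) (hk : k = LinearMap.ker (σ - LinearMap.id))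
    (r : g ⊗[K] g) :
    (∀ x ∈ k,
      ((TensorProduct.map (LieAlgebra.ad K g x) LinearMap.id
        + TensorProduct.map LinearMap.id (LieAlgebra.ad K g x) :
          g ⊗[K] g →ₗ[K] g ⊗[K] g)) r
        ∈ LinearMap.range (TensorProduct.map (LinearMap.id : g →ₗ[K] g) k.subtype) ⊔
          LinearMap.range (TensorProduct.map k.subtype (LinearMap.id : g →ₗ[K] g)))
    ↔ (∀ x ∈ k,
      ((TensorProduct.map (LieAlgebra.ad K g x) LinearMap.id
        + TensorProduct.map LinearMap.id (LieAlgebra.ad K g x) :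
          g ⊗[K] g →ₗ[K] g ⊗[K] g))
        (TensorProduct.map σ σ r + r - TensorProduct.map σ LinearMap.id r
          - TensorProduct.map LinearMap.id σ r) = 0) := by
  set τ : g →ₗ[K] g := σ - LinearMap.id with hτ
  -- C_σ(r) = (τ ⊗ τ) r
  have hC : TensorProduct.map σ σ r + r - TensorProduct.map σ LinearMap.id r
      - TensorProduct.map LinearMap.id σ r = TensorProduct.map τ τ r := by
    have : TensorProduct.map τ τ = TensorProduct.map σ σ + TensorProduct.map LinearMap.id
        LinearMap.id - TensorProduct.map σ LinearMap.id - TensorProduct.map LinearMap.id σ := by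
      apply TensorProduct.ext'
      intro a b
      simp [hτ, TensorProduct.tmul_sub, TensorProduct.sub_tmul]
      abel
    rw [this]
    simp
  rw [hC]
  -- the operator D_x commutes with map τ τ for x ∈ k
  have key : ∀ x ∈ k,
      ∀ t : g ⊗[K] g,
      ((TensorProduct.map (LieAlgebra.ad K g x) LinearMap.id
        + TensorProduct.map LinearMap.id (LieAlgebra.ad K g x) :
          g ⊗[K] g →ₗ[K] g ⊗[K] g)) (TensorProduct.map τ τ t)
      = TensorProduct.map τ τ
        (((TensorProduct.map (LieAlgebra.ad K g x) LinearMap.id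
          + TensorProduct.map LinearMap.id (LieAlgebra.ad K g x) :
            g ⊗[K] g →ₗ[K] g ⊗[K] g)) t) := by
    intro x hx t
    have hxfix : σ x = x := by
      rw [hk] at hx
      have := LinearMap.mem_ker.mp hx
      have h2 : σ x - x = 0 := by simpa [hτ] using this
      exact sub_eq_zero.mp h2
    have hcomm : (LieAlgebra.ad K g x).comp τ = τ.comp (LieAlgebra.ad K g x) := by
      ext y
      simp [hτ, LieAlgebra.ad_apply, hσlie, hxfix]
    have : ∀ s : g ⊗[K] g, True := fun _ => trivial
    induction t using TensorProduct.induction_on with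
    | zero => simp
    | tmul a b =>
      simp only [TensorProduct.map_tmul, LinearMap.add_apply, TensorProduct.map_tmul,
        LinearMap.id_coe, id_eq, TensorProduct.tmul_add, TensorProduct.add_tmul]
      have h1 : (LieAlgebra.ad K g x) (τ a) = τ ((LieAlgebra.ad K g x) a) :=
        LinearMap.congr_fun hcomm a
      have h2 : (LieAlgebra.ad K g x) (τ b) = τ ((LieAlgebra.ad K g x) b) :=
        LinearMap.congr_fun hcomm b
      rw [h1, h2]
      simp [TensorProduct.tmul_add, TensorProduct.add_tmul]
    | add s t hs ht =>
      simp only [map_add, hs, ht]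
  constructor
  · intro h x hx
    rw [key x hx r, ← LinearMap.mem_ker, ker_map_eq, ← hk]
    exact h x hx
  · intro h x hx
    have := h x hx
    rw [key x hx r, ← LinearMap.mem_ker, ker_map_eq, ← hk] at this
    exact this
end

section
/- Let G be a group, σ an automorphism of G, and h₊, h₋ ∈ G. Define K₋ = h₋·σ(h₋)⁻¹, K₊ = σ(h₊)·h₊⁻¹, and in a finite-dimensional representation ρ set τ(g) = tr(ρ(g K₋ σ(g)⁻¹ K₊)). Then τ(φ₊(k) g φ₋(k')) = τ(g) for all k, k' in the fixed subgroup K = G^σ, where φ₊(k) = h₊ k h₊⁻¹ and φ₋(k') = h₋ k' h₋⁻¹. -/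
/-- Twisted bi-invariance of the twisted reflection transfer matrix
`τ(g) = tr(ρ(g K₋ σ(g)⁻¹ K₊))` with `K₋ = h₋ σ(h₋)⁻¹`, `K₊ = σ(h₊) h₊⁻¹`, under
`g ↦ φ₊(k) g φ₋(k')` where `φ₊(k) = h₊ k h₊⁻¹`, `φ₋(k') = h₋ k' h₋⁻¹` and `k, k'` are fixed
by the automorphism `σ`. -/
theorem stmt8 (F : Type*) [Field F] (V : Type*) [AddCommGroup V] [Module F V]
    [FiniteDimensional F V]
    (G : Type*) [Group G] (σ : G ≃* G) (ρ : G →* Module.End F V)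
    (hp hm g k k' : G) (hk : σ k = k) (hk' : σ k' = k') :
    LinearMap.trace F V
      (ρ (((hp * k * hp⁻¹) * g * (hm * k' * hm⁻¹)) * (hm * (σ hm)⁻¹)
          * (σ ((hp * k * hp⁻¹) * g * (hm * k' * hm⁻¹)))⁻¹ * (σ hp * hp⁻¹)))
      = LinearMap.trace F V
        (ρ (g * (hm * (σ hm)⁻¹) * (σ g)⁻¹ * (σ hp * hp⁻¹))) := by
  have hA : (((hp * k * hp⁻¹) * g * (hm * k' * hm⁻¹)) * (hm * (σ hm)⁻¹)
      * (σ ((hp * k * hp⁻¹) * g * (hm * k' * hm⁻¹)))⁻¹ * (σ hp * hp⁻¹))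
      = (hp * k * hp⁻¹) *
        ((g * (hm * (σ hm)⁻¹) * (σ g)⁻¹ * (σ hp * hp⁻¹)) * (hp * k * hp⁻¹)⁻¹) := by
    simp only [map_mul, map_inv, hk, hk']
    group
  rw [hA, map_mul, LinearMap.trace_mul_comm, ← map_mul, inv_mul_cancel_right]
end
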